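/- Let f = Σ_{k=1}^t c_k X^{e_k} ∈ F_q[x₁,…,xₙ] with char(F_q) > max_k,i e_{k,i}, distinct exponent vectors e_k, and nonzero c_k. Suppose α ∈ (F_q*)ⁿ is a good point of f, i.e. the values v_k = α^{e_k} are pairwise distinct. Then f is uniquely determined by the 2t evaluations f(α^{(j)}) for j = 0,…,2t−1 together with the n·t evaluations (x_i ∂f/∂x_i)(α^{(j)}) for i = 1,…,n and j = 0,…,t−1: the c_k and v_k are recovered from Prony's method, and each integer exponent e_{k,i} equals the unique natural number less than char(F_q) whose image in F_q is (Σ-component) (c_k e_{k,i})/c_k. -/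

import Mathlib

open scoped Classical

lemma vand {F : Type*} [Field F] {m : ℕ} {v : Fin m → F} (hv : Function.Injective v)
    {d : Fin m → F} (h : ∀ j < m, ∑ k, d k * v k ^ j = 0) : ∀ k, d k = 0 := by
  have := Matrix.eq_zero_of_forall_pow_sum_mul_pow_eq_zero (f := v) (v := d) hv
    (fun i => h i i.isLt)
  exact fun k => congrFun this k

lemma group_sum {F : Type*} [Field F] {ι : Type*} [Fintype ι] [DecidableEq ι]
    (u d : ι → F) (N : ℕ) (hN : (Finset.univ.image u).card ≤ N)
    (h : ∀ j < N, ∑ k, d k * u k ^ j = 0) (a : F) :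
    ∑ k, (if u k = a then d k else 0) = 0 := by
  classical
  set S := Finset.univ.image u with hS
  set s := S.card with hscard
  set w : Fin s → F := fun j => ((S.equivFin.symm j : S) : F) with hw
  have hwinj : Function.Injective w := fun j1 j2 hj =>
    S.equivFin.symm.injective (Subtype.ext hj)
  set d' : Fin s → F := fun j => ∑ k, (if u k = w j then d k else 0) with hd'
  have key : ∀ j < s, ∑ k', d' k' * w k' ^ j = 0 := by
    intro j hj
    have hfib : ∑ k', d' k' * w k' ^ j = ∑ a ∈ S, ∑ k, (if u k = a then d k * u k ^ j else 0) := by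
      rw [← Finset.sum_coe_sort S (fun a => ∑ k, (if u k = (a : F) then d k * u k ^ j else 0))]
      rw [← Equiv.sum_comp S.equivFin.symm]
      refine Finset.sum_congr rfl fun k' _ => ?_
      rw [hd']
      rw [Finset.sum_mul]
      refine Finset.sum_congr rfl fun k _ => ?_
      by_cases hk : u k = w k'
      · simp [hk]
        exact fun h => absurd rfl h
      · simp [hk]
        exact fun h => absurd h hk
    rw [hfib]
    have : ∑ a ∈ S, ∑ k, (if u k = a then d k * u k ^ j else 0)
        = ∑ k, d k * u k ^ j := by
      rw [Finset.sum_comm]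
      refine Finset.sum_congr rfl fun k _ => ?_
      rw [Finset.sum_ite_eq S (u k) (fun _ => d k * u k ^ j)]
      simp [hS]
    rw [this]
    exact h j (lt_of_lt_of_le hj hN)
  have hz := vand hwinj key
  by_cases ha : a ∈ S
  · have : a = w (S.equivFin ⟨a, ha⟩) := by simp [hw]
    rw [this]
    exact hz _
  · apply Finset.sum_eq_zero
    intro k _
    have : u k ≠ a := fun hk => ha (hk ▸ Finset.mem_image_of_mem u (Finset.mem_univ k))
    simp [this]

lemma eval_pow_sum {F : Type*} [Field F] {n t : ℕ} (c : Fin t → F) (e : Fin t → (Fin n →₀ ℕ))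
    (α : Fin n → Fˣ) (j : ℕ) :
    MvPolynomial.eval (fun l => (α l : F) ^ j) (∑ k, MvPolynomial.monomial (e k) (c k))
      = ∑ k, c k * (∏ l, (α l : F) ^ e k l) ^ j := by
  rw [map_sum]
  refine Finset.sum_congr rfl fun k _ => ?_
  rw [MvPolynomial.eval_monomial, Finsupp.prod_fintype _ _ (fun i => pow_zero _),
    ← Finset.prod_pow]
  congr 1
  refine Finset.prod_congr rfl fun l _ => ?_
  rw [← pow_mul, ← pow_mul, mul_comm]

lemma eval_der {F : Type*} [Field F] {n : ℕ} (e : Fin n →₀ ℕ) (a : F) (x : Fin n → F)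
    (i : Fin n) :
    MvPolynomial.eval x (MvPolynomial.X i * MvPolynomial.pderiv i (MvPolynomial.monomial e a))
      = a * (e i : F) * ∏ l, x l ^ e l := by
  rw [MvPolynomial.pderiv_monomial, map_mul, MvPolynomial.eval_X, MvPolynomial.eval_monomial]
  rcases Nat.eq_zero_or_pos (e i) with h | h
  · simp [h]
  · rw [Finsupp.prod_fintype _ _ (fun l => pow_zero _)]
    have h1 : ∏ l, x l ^ ((e - Finsupp.single i 1 : Fin n →₀ ℕ) l)
        = x i ^ (e i - 1) * ∏ l ∈ Finset.univ.erase i, x l ^ e l := by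
      rw [← Finset.mul_prod_erase Finset.univ _ (Finset.mem_univ i)]
      congr 1
      · rw [Finsupp.tsub_apply, Finsupp.single_eq_same]
      · refine Finset.prod_congr rfl fun l hl => ?_
        rw [Finsupp.tsub_apply, Finsupp.single_eq_of_ne' (Finset.ne_of_mem_erase hl).symm,
          Nat.sub_zero]
    have h2 : ∏ l, x l ^ e l = x i ^ e i * ∏ l ∈ Finset.univ.erase i, x l ^ e l := by
      rw [← Finset.mul_prod_erase Finset.univ _ (Finset.mem_univ i)]
    have h3 : x i * x i ^ (e i - 1) = x i ^ e i := by
      conv_rhs => rw [← Nat.succ_pred_eq_of_pos h]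
      rw [pow_succ']
      rfl
    rw [h1, h2, ← h3]
    ring

/-- a sparse polynomial with a good point and partial degrees
below the characteristic is uniquely determined by the evaluations
f(α^{(j)}), j < 2t, and (x_i ∂f/∂x_i)(α^{(j)}), j < t. -/
theorem stmt11 (F : Type*) [Field F] [Fintype F] (n t t' : ℕ) (ht' : t' ≤ t)
    (c : Fin t → F) (c' : Fin t' → F) (hc : ∀ k, c k ≠ 0) (hc' : ∀ k, c' k ≠ 0)
    (e : Fin t → (Fin n →₀ ℕ)) (e' : Fin t' → (Fin n →₀ ℕ))
    (he : Function.Injective e) (he' : Function.Injective e')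
    (hdeg : ∀ k i, e k i < ringChar F) (hdeg' : ∀ k i, e' k i < ringChar F)
    (f g : MvPolynomial (Fin n) F)
    (hf : f = ∑ k, MvPolynomial.monomial (e k) (c k))
    (hg : g = ∑ k, MvPolynomial.monomial (e' k) (c' k))
    (α : Fin n → Fˣ)
    (hgood : Function.Injective fun k : Fin t => ∏ l, (α l : F) ^ e k l)
    (hgood' : Function.Injective fun k : Fin t' => ∏ l, (α l : F) ^ e' k l)
    (heval : ∀ j < 2 * t, MvPolynomial.eval (fun l => (α l : F) ^ j) f
        = MvPolynomial.eval (fun l => (α l : F) ^ j) g)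
    (hder : ∀ i : Fin n, ∀ j < t,
        MvPolynomial.eval (fun l => (α l : F) ^ j)
            (MvPolynomial.X i * MvPolynomial.pderiv i f)
      = MvPolynomial.eval (fun l => (α l : F) ^ j)
            (MvPolynomial.X i * MvPolynomial.pderiv i g)) :
    f = g := by
  classical
  set v : Fin t → F := fun k => ∏ l, (α l : F) ^ e k l with hv
  set w : Fin t' → F := fun k => ∏ l, (α l : F) ^ e' k l with hw
  have hvinj : Function.Injective v := hgood
  have hwinj : Function.Injective w := hgood'
  -- step 1: exponential sums equal
  have hsum : ∀ j < t + t', ∑ k, c k * v k ^ j = ∑ k, c' k * w k ^ j := by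
    intro j hj
    have h0 := heval j (by omega)
    rw [hf, hg, eval_pow_sum, eval_pow_sum] at h0
    exact h0
  -- step 2: grouped coefficients
  have key : ∀ a : F, (∑ k, if v k = a then c k else 0)
      = ∑ k, if w k = a then c' k else 0 := by
    intro a
    have h0 := group_sum (Sum.elim v w) (Sum.elim c (fun k => - c' k)) (t + t')
      (le_trans (Finset.card_image_le) (by simp)) ?_ a
    · rw [Fintype.sum_sum_type] at h0
      simp only [Sum.elim_inl, Sum.elim_inr] at h0
      have h1 : ∑ k : Fin t', (if w k = a then - c' k else 0)
          = - ∑ k : Fin t', (if w k = a then c' k else 0) := by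
        rw [← Finset.sum_neg_distrib]
        refine Finset.sum_congr rfl fun k _ => ?_
        by_cases hk : w k = a <;> simp [hk]
      have h0 : ((∑ k, if v k = a then c k else 0) + ∑ k, if w k = a then -c' k else 0) = 0 := h0
      rw [h1] at h0
      linear_combination h0
    · intro j hj
      rw [Fintype.sum_sum_type]
      simp only [Sum.elim_inl, Sum.elim_inr, neg_mul]
      rw [Finset.sum_neg_distrib]
      rw [hsum j hj]
      ring
  -- step 3: construct the matching
  have hmatch : ∀ k : Fin t, ∃ k' : Fin t', w k' = v k ∧ c' k' = c k := by
    intro k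
    have h0 := key (v k)
    have hL : (∑ k1, if v k1 = v k then c k1 else 0) = c k := by
      rw [Finset.sum_eq_single k]
      · simp
      · intro k1 _ hne
        have : v k1 ≠ v k := fun hh => hne (hvinj hh)
        simp [this]
      · simp
    rw [hL] at h0
    by_cases hex : ∃ k' : Fin t', w k' = v k
    · obtain ⟨k', hk'⟩ := hex
      refine ⟨k', hk', ?_⟩
      rw [Finset.sum_eq_single k'] at h0
      · rw [if_pos hk'] at h0
        exact h0.symm
      · intro k1 _ hne
        have : w k1 ≠ v k := fun hh => hne (hwinj (hh.trans hk'.symm))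
        simp [this]
      · simp
    · push_neg at hex
      have : (∑ k', if w k' = v k then c' k' else 0) = 0 :=
        Finset.sum_eq_zero fun k' _ => by simp [hex k']
      rw [this] at h0
      exact absurd h0 (hc k)
  choose σ hσw hσc using hmatch
  have hσinj : Function.Injective σ := by
    intro a b hab
    apply hvinj
    rw [← hσw a, ← hσw b, hab]
  have hσsurj : Function.Surjective σ := by
    intro k'
    have h0 := key (w k')
    have hR : (∑ k1, if w k1 = w k' then c' k1 else 0) = c' k' := by
      rw [Finset.sum_eq_single k']
      · simp
      · intro k1 _ hne
        have : w k1 ≠ w k' := fun hh => hne (hwinj hh)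
        simp [this]
      · simp
    rw [hR] at h0
    by_cases hex : ∃ k : Fin t, v k = w k'
    · obtain ⟨k, hk⟩ := hex
      exact ⟨k, hwinj ((hσw k).trans hk)⟩
    · push_neg at hex
      have : (∑ k1, if v k1 = w k' then c k1 else 0) = 0 :=
        Finset.sum_eq_zero fun k1 _ => by simp [hex k1]
      rw [this] at h0
      exact absurd h0.symm (hc' k')
  have hσbij : Function.Bijective σ := ⟨hσinj, hσsurj⟩
  -- step 4: derivative sums
  have hde : ∀ k i, e k i = e' (σ k) i := by
    intro k i
    have hders : ∀ j < t, ∑ k, (c k * (e k i : F)) * v k ^ j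
        = ∑ k, (c' k * (e' k i : F)) * w k ^ j := by
      intro j hj
      have h0 := hder i j hj
      rw [hf, hg, map_sum, map_sum, Finset.mul_sum, Finset.mul_sum, map_sum, map_sum] at h0
      simp only [eval_der] at h0
      have hpow : ∀ (m : Fin n →₀ ℕ), ∏ l, ((α l : F) ^ j) ^ m l
          = (∏ l, (α l : F) ^ m l) ^ j := by
        intro m
        rw [← Finset.prod_pow]
        exact Finset.prod_congr rfl fun l _ => by rw [← pow_mul, ← pow_mul, mul_comm]
      simp only [hpow] at h0
      exact h0
    have hvand : ∀ k1 : Fin t,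
        (c k1 * (e k1 i : F) - c' (σ k1) * (e' (σ k1) i : F)) = 0 := by
      apply vand hvinj
      intro j hj
      simp only [sub_mul]
      rw [Finset.sum_sub_distrib]
      have hre : ∑ k1, (c' (σ k1) * (e' (σ k1) i : F)) * v k1 ^ j
          = ∑ k1, (c' k1 * (e' k1 i : F)) * w k1 ^ j := by
        refine Fintype.sum_bijective σ hσbij _ _ fun k1 => ?_
        rw [hσw k1]
      rw [hre, hders j hj, sub_self]
    have h1 := hvand k
    rw [hσc k] at h1
    have h2 : (e k i : F) = (e' (σ k) i : F) := by
      have := sub_eq_zero.mp h1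
      exact mul_left_cancel₀ (hc k) this
    have : CharP F (ringChar F) := ringChar.charP F
    exact CharP.natCast_injOn_Iio F (ringChar F) (Set.mem_Iio.mpr (hdeg k i))
      (Set.mem_Iio.mpr (hdeg' (σ k) i)) h2
  have hee : ∀ k, e k = e' (σ k) := fun k => Finsupp.ext fun i => hde k i
  rw [hf, hg]
  refine Fintype.sum_bijective σ hσbij _ _ fun k => ?_
  rw [hee k, hσc k]
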